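/- Let M be a connected locally compact topological group with an admissible left-invariant distance function d, and let K be a compact normal subgroup of M. Then there is a distance function d' on the quotient group M/K inducing the quotient topology such that the quotient map x ↦ xK from (M,d) to (M/K, d') is 1-Lipschitz and a (1, diam(K))-quasi-isometry, where diam(K) is the diameter of K with respect to d. -/

import Mathlib

/-- `f` is an `(L, C)`-quasi-isometry between the distances `dX` and `dY`. -/
def IsQuasiIsometry {X Y : Type*} (L C : ℝ) (dX : X → X → ℝ) (dY : Y → Y → ℝ)
    (f : X → Y) : Prop :=
  (∀ x y : X, L⁻¹ * dX x y - C ≤ dY (f x) (f y) ∧ dY (f x) (f y) ≤ L * dX x y + C) ∧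
  ∀ z : Y, ∃ x : X, dY (f x) z ≤ C

/-- `d` is a distance function on `X` inducing the given topology. -/
def IsCompatibleDist (X : Type*) [TopologicalSpace X] (d : X → X → ℝ) : Prop :=
  (∀ x y : X, d x y = 0 ↔ x = y) ∧ (∀ x y : X, d x y = d y x) ∧
  (∀ x y z : X, d x z ≤ d x y + d y z) ∧
  ∀ (x : X) (s : Set X), s ∈ nhds x ↔ ∃ ε > 0, {y : X | d x y < ε} ⊆ s

/-- a connected locally compact metric group modulo a compact
normal subgroup `K` carries a distance inducing the quotient topology for
which the quotient homomorphism is 1-Lipschitz and a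
`(1, diam K)`-quasi-isometry. -/
theorem statement16 (M : Type*) [MetricSpace M] [Group M] [IsTopologicalGroup M]
    [ConnectedSpace M] [LocallyCompactSpace M]
    (hleft : ∀ g x y : M, dist (g * x) (g * y) = dist x y)
    (K : Subgroup M) (hKn : K.Normal) (hKc : IsCompact (K : Set M)) :
    ∃ d' : (M ⧸ K) → (M ⧸ K) → ℝ,
      IsCompatibleDist (M ⧸ K) d' ∧
      (∀ x y : M, d' (QuotientGroup.mk x) (QuotientGroup.mk y) ≤ dist x y) ∧
      IsQuasiIsometry 1 (Metric.diam (K : Set M)) (fun x y : M => dist x y) d'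
        (QuotientGroup.mk : M → M ⧸ K) := by
  classical
  set S : (M ⧸ K) → Set M := fun a => (QuotientGroup.mk : M → M ⧸ K) ⁻¹' {a} with hSdef
  have hmemS : ∀ (a : M ⧸ K) (m : M), m ∈ S a ↔ (QuotientGroup.mk m : M ⧸ K) = a := by
    intro a m; simp [hSdef]
  have hmem : ∀ x m : M, m ∈ S (QuotientGroup.mk x) ↔ x⁻¹ * m ∈ K := by
    intro x m
    rw [hmemS, eq_comm, QuotientGroup.eq]
  have hself : ∀ x : M, x ∈ S (QuotientGroup.mk x) := by
    intro x; rw [hmem]; simpa using K.one_mem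
  have hne : ∀ a : M ⧸ K, (S a).Nonempty := by
    intro a
    induction a using Quotient.inductionOn with
    | h x => exact ⟨x, hself x⟩
  have hcompact : ∀ a : M ⧸ K, IsCompact (S a) := by
    intro a
    induction a using Quotient.inductionOn with
    | h x =>
      have : S (QuotientGroup.mk x) = (fun k => x * k) '' (K : Set M) := by
        ext m
        constructor
        · intro hm
          exact ⟨x⁻¹ * m, (hmem x m).1 hm, by group⟩
        · rintro ⟨k, hk, rfl⟩
          rw [hmem]
          simpa [mul_assoc] using hk
      rw [this]
      exact hKc.image (continuous_const.mul continuous_id)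
  have hfin : ∀ a b : M ⧸ K, EMetric.hausdorffEdist (S a) (S b) ≠ ⊤ := fun a b =>
    Metric.hausdorffEdist_ne_top_of_nonempty_of_bounded (hne a) (hne b)
      (hcompact a).isBounded (hcompact b).isBounded
  set d' : (M ⧸ K) → (M ⧸ K) → ℝ := fun a b => Metric.hausdorffDist (S a) (S b) with hd'def
  -- 1-Lipschitz
  have key : ∀ x y m : M, m ∈ S (QuotientGroup.mk x) →
      ∃ n ∈ S (QuotientGroup.mk y), dist m n ≤ dist x y := by
    intro x y m hm
    have hk : m * x⁻¹ ∈ K := by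
      have := hKn.conj_mem _ ((hmem x m).1 hm) x
      simpa [mul_assoc] using this
    refine ⟨m * x⁻¹ * y, ?_, ?_⟩
    · rw [hmem]
      have := hKn.conj_mem _ hk y⁻¹
      simpa [mul_assoc] using this
    · have heq : dist (m * x⁻¹ * x) (m * x⁻¹ * y) = dist x y := hleft _ _ _
      have hmx : m * x⁻¹ * x = m := by group
      rw [hmx] at heq
      exact heq.le
  have hlip : ∀ x y : M, d' (QuotientGroup.mk x) (QuotientGroup.mk y) ≤ dist x y := by
    intro x y
    refine Metric.hausdorffDist_le_of_mem_dist dist_nonneg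
      (fun m hm => key x y m hm) (fun m hm => ?_)
    obtain ⟨n, hn, hd⟩ := key y x m hm
    exact ⟨n, hn, by rwa [dist_comm x y]⟩
  have hdiam0 : (0 : ℝ) ≤ Metric.diam (K : Set M) := Metric.diam_nonneg
  -- distance from a point of a coset to the base point of the coset
  have hcoset_diam : ∀ (y n : M), n ∈ S (QuotientGroup.mk y) →
      dist n y ≤ Metric.diam (K : Set M) := by
    intro y n hn
    have hk : y⁻¹ * n ∈ K := (hmem y n).1 hn
    have : dist n y = dist (y⁻¹ * n) 1 := by
      have h1 : n = y * (y⁻¹ * n) := by group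
      have h2 : y = y * 1 := by group
      calc dist n y = dist (y * (y⁻¹ * n)) (y * 1) := by rw [← h1, ← h2]
        _ = dist (y⁻¹ * n) 1 := hleft _ _ _
    rw [this]
    exact Metric.dist_le_diam_of_mem hKc.isBounded hk K.one_mem
  -- lower bound
  have hlow : ∀ x y : M, dist x y - Metric.diam (K : Set M) ≤
      d' (QuotientGroup.mk x) (QuotientGroup.mk y) := by
    intro x y
    have h1 : dist x y - Metric.diam (K : Set M) ≤
        Metric.infDist x (S (QuotientGroup.mk y)) := by
      refine le_of_not_gt fun hlt => ?_
      obtain ⟨n, hn, hdn⟩ := (Metric.infDist_lt_iff (hne _)).1 hlt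
      have := hcoset_diam y n hn
      have htri : dist x y ≤ dist x n + dist n y := dist_triangle x n y
      linarith
    exact h1.trans (Metric.infDist_le_hausdorffDist_of_mem (hself x) (hfin _ _))
  -- compatibility with the quotient topology
  have hballs : ∀ (x : M) (ε : ℝ), {z : M ⧸ K | d' (QuotientGroup.mk x) z < ε} =
      (QuotientGroup.mk : M → M ⧸ K) '' Metric.ball x ε := by
    intro x ε
    ext z
    induction z using Quotient.inductionOn with
    | h y =>
      constructor
      · intro hz
        have h1 : Metric.infDist x (S (QuotientGroup.mk y)) < ε :=
          lt_of_le_of_lt (Metric.infDist_le_hausdorffDist_of_mem (hself x) (hfin _ _)) hz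
        obtain ⟨n, hn, hdn⟩ := (Metric.infDist_lt_iff (hne _)).1 h1
        exact ⟨n, by rwa [Metric.mem_ball, dist_comm], (hmemS _ n).1 hn⟩
      · rintro ⟨n, hn, hmk⟩
        have h1 : d' (QuotientGroup.mk x) (QuotientGroup.mk n) ≤ dist x n := hlip x n
        have hn' : dist x n < ε := by rwa [Metric.mem_ball, dist_comm] at hn
        show _ ∈ {z : M ⧸ K | d' (QuotientGroup.mk x) z < ε}
        rw [← hmk]
        exact lt_of_le_of_lt h1 hn'
  have hnhds : ∀ (x : M) (s : Set (M ⧸ K)), s ∈ nhds (QuotientGroup.mk x : M ⧸ K) ↔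
      ∃ ε > 0, {z : M ⧸ K | d' (QuotientGroup.mk x) z < ε} ⊆ s := by
    intro x s
    rw [← (QuotientGroup.isOpenQuotientMap_mk (N := K)).map_nhds_eq x, Filter.mem_map,
      Metric.mem_nhds_iff]
    constructor
    · rintro ⟨ε, hε, hsub⟩
      refine ⟨ε, hε, ?_⟩
      rw [hballs]
      exact (Set.image_subset_iff).2 hsub
    · rintro ⟨ε, hε, hsub⟩
      rw [hballs] at hsub
      exact ⟨ε, hε, (Set.image_subset_iff).1 hsub⟩
  refine ⟨d', ⟨?_, ?_, ?_, ?_⟩, hlip, ⟨?_, ?_⟩⟩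
  · -- zero iff eq
    intro a b
    rw [hd'def]
    rw [(hcompact a).isClosed.hausdorffDist_zero_iff_eq (hcompact b).isClosed (hfin a b)]
    constructor
    · intro h
      obtain ⟨m, hm⟩ := hne a
      have hm' : m ∈ S b := h ▸ hm
      rw [hmemS] at hm hm'
      rw [← hm, hm']
    · rintro rfl; rfl
  · intro a b; exact Metric.hausdorffDist_comm
  · intro a b c
    exact Metric.hausdorffDist_triangle (hfin a b)
  · -- topology
    intro a s
    induction a using Quotient.inductionOn with
    | h x => exact hnhds x s
  · -- QI bounds
    intro x y
    constructor
    · simpa using hlow x y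
    · have := hlip x y
      simpa using le_trans this (by linarith)
  · -- approximate surjectivity
    intro z
    induction z using Quotient.inductionOn with
    | h y =>
      refine ⟨y, ?_⟩
      show Metric.hausdorffDist _ _ ≤ _
      rw [Metric.hausdorffDist_self_zero]
      exact hdiam0
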